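/- With Ğ(y,x) as defined, for any fixed y ∈ (0,1/2), the limit of ∂Ğ/∂x as x → 1⁻ equals log(2)·((1-y)·(1 + (1/2)·log(y/(1-y))) - h₂(y)/2), and this quantity is strictly negative for all y ∈ (0,1/2). -/

import Mathlib

/-- Two-point (Bernoulli) Kullback–Leibler divergence (natural log). -/
noncomputable def klBer (a b : ℝ) : ℝ :=
  a * Real.log (a / b) + (1 - a) * Real.log ((1 - a) / (1 - b))

/-- Binary entropy (base 2). -/
noncomputable def binEnt (x : ℝ) : ℝ := -x * Real.logb 2 x - (1 - x) * Real.logb 2 (1 - x)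

/-- `y_{(x)} = y + (1-y)(2^{1-x} - 1)`. -/
noncomputable def yOf (y x : ℝ) : ℝ := y + (1 - y) * ((2 : ℝ) ^ (1 - x) - 1)

/-- The function `G(y, y', x)`. -/
noncomputable def Gfun (y y' x : ℝ) : ℝ :=
  x / 2 * klBer y (1 / 2) + y' * klBer (y / y') ((2 : ℝ) ^ (-(1 - x)))
    - klBer y (1 / 2) + 1 / 2 * klBer y' ((2 : ℝ) ^ (-x))

/-- `Ğ(y,x) = G(y, y_{(x)}, x)`. -/
noncomputable def Gbr (y x : ℝ) : ℝ := Gfun y (yOf y x) x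

open Real Set

lemma log_lt_quad {u : ℝ} (h0 : 0 < u) (h1 : u < 1) :
    Real.log u < (u - 1) - (u - 1)^2 / 2 := by
  set g : ℝ → ℝ := fun v => (v - 1) - (v - 1)^2 / 2 - Real.log v with hg
  have key : StrictAntiOn g (Set.Icc u 1) := by
    apply strictAntiOn_of_deriv_neg (convex_Icc u 1)
    · apply ContinuousOn.sub
      · fun_prop
      · apply Real.continuousOn_log.mono
        intro v hv
        exact ne_of_gt (lt_of_lt_of_le h0 hv.1)
    · intro v hv
      rw [interior_Icc] at hv
      have hv0 : 0 < v := lt_trans h0 hv.1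
      have hd : HasDerivAt g (1 - (v - 1) - v⁻¹) v := by
        have h1 : HasDerivAt (fun v : ℝ => (v - 1) - (v - 1)^2 / 2) (1 - (v-1)) v := by
          have : HasDerivAt (fun v : ℝ => v - 1) 1 v := (hasDerivAt_id v).sub_const 1
          have h2 := ((this.pow 2).div_const 2)
          refine (this.sub h2).congr_deriv ?_
          push_cast
          ring
        exact h1.sub (Real.hasDerivAt_log hv0.ne')
      rw [hd.deriv]
      have : 1 - (v - 1) - v⁻¹ = -((v-1)^2/v) := by field_simp; ring
      rw [this]
      have hne : v - 1 ≠ 0 := sub_ne_zero.2 (ne_of_lt hv.2)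
      have : 0 < (v-1)^2/v := by positivity
      linarith
  have := key (Set.mem_Icc.2 ⟨le_refl u, h1.le⟩) (Set.mem_Icc.2 ⟨h1.le, le_refl 1⟩) h1
  simp only [hg, Real.log_one] at this
  nlinarith [this]

lemma log_lt_quad' {w : ℝ} (h0 : 1/2 < w) (h1 : w < 1) :
    Real.log w < -Real.log 2 + 2*(w - 1/2) - (w - 1/2)^2 := by
  set g : ℝ → ℝ := fun v => -Real.log 2 + 2*(v - 1/2) - (v - 1/2)^2 - Real.log v with hg
  have key : StrictMonoOn g (Set.Icc (1/2) w) := by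
    apply strictMonoOn_of_deriv_pos (convex_Icc _ _)
    · apply ContinuousOn.sub
      · fun_prop
      · apply Real.continuousOn_log.mono
        intro v hv
        have : (0:ℝ) < 1/2 := by norm_num
        exact ne_of_gt (lt_of_lt_of_le this hv.1)
    · intro v hv
      rw [interior_Icc] at hv
      have hv0 : (0:ℝ) < v := lt_trans (by norm_num) hv.1
      have hd : HasDerivAt g (2 - 2*(v - 1/2) - v⁻¹) v := by
        have h1 : HasDerivAt (fun v : ℝ => -Real.log 2 + 2*(v - 1/2) - (v - 1/2)^2) (2 - 2*(v - 1/2)) v := by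
          have hb : HasDerivAt (fun v : ℝ => v - 1/2) 1 v := (hasDerivAt_id v).sub_const _
          have h2 := (hb.const_mul 2).const_add (-Real.log 2)
          refine (h2.sub ((hb.pow 2))).congr_deriv ?_
          push_cast
          ring
        exact h1.sub (Real.hasDerivAt_log hv0.ne')
      rw [hd.deriv]
      have he : 2 - 2*(v - 1/2) - v⁻¹ = (2*v - 1)*(1 - v)/v := by field_simp; ring
      rw [he]
      have hv1 : v < 1 := lt_of_lt_of_le hv.2 h1.le
      have h2v : 0 < 2*v - 1 := by linarith [hv.1]
      have h3 : 0 < 1 - v := by linarith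
      positivity
  have := key (Set.mem_Icc.2 ⟨le_refl _, h0.le⟩) (Set.mem_Icc.2 ⟨h0.le, le_refl w⟩) h0
  have hl : Real.log (1/2 : ℝ) = -Real.log 2 := by
    rw [one_div, Real.log_inv]
  simp only [hg, hl] at this
  nlinarith [this]

lemma Tval_neg (y : ℝ) (hy0 : 0 < y) (hy : y < 1 / 2) :
    Real.log 2 * ((1 - y) * (1 + 1 / 2 * Real.log (y / (1 - y))) - binEnt y / 2) < 0 := by
  set c := Real.log 2 with hc
  have hc0 : 0 < c := Real.log_pos (by norm_num)
  have hcu : c < 0.6931471808 := Real.log_two_lt_d9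
  have hcl : 0.6931471803 < c := Real.log_two_gt_d9
  have h1y : 0 < 1 - y := by linarith
  have hrw : c * ((1 - y) * (1 + 1 / 2 * Real.log (y / (1 - y))) - binEnt y / 2)
      = c * (1-y) + ((y + c*(1-y))/2) * Real.log y + ((1-y)*(1-c)/2) * Real.log (1-y) := by
    rw [Real.log_div hy0.ne' h1y.ne', binEnt, Real.logb, Real.logb]
    field_simp
    ring
  rw [hrw]
  have hb1 : Real.log y < -c + (2*y - 1) - 2*(y - 1/2)^2 := by
    have h2y : Real.log (2*y) < (2*y - 1) - (2*y - 1)^2/2 := log_lt_quad (by linarith) (by linarith)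
    rw [Real.log_mul (by norm_num) hy0.ne'] at h2y
    nlinarith [h2y]
  have hb2 : Real.log (1 - y) < -c + 2*((1-y) - 1/2) - ((1-y) - 1/2)^2 :=
    log_lt_quad' (by linarith) (by linarith)
  have hk1 : 0 < (y + c*(1-y))/2 := by nlinarith
  have hk2 : 0 < (1-y)*(1-c)/2 := by nlinarith
  have key1 := mul_lt_mul_of_pos_left hb1 hk1
  have key2 := mul_lt_mul_of_pos_left hb2 hk2
  have hsq : 0 < (y - 1/2)^2 := by have h : y - 1/2 < 0 := by linarith
                                   nlinarith
  have hP : (y - 1/2)^2 * (3 - 5*c - y*(1-c)) < 0 := by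
    apply mul_neg_of_pos_of_neg hsq
    nlinarith
  nlinarith [key1, key2, hP]

noncomputable def Ffun (y x : ℝ) : ℝ :=
  (x/2 - 1) * (Real.log 2 + y * Real.log y + (1-y) * Real.log (1-y))
  + y * Real.log y
  + (1-y) * ((2:ℝ)^(1-x) - 1) * Real.log (1-y)
  - 1/2 * (yOf y x * Real.log (yOf y x))
  + Real.log 2 * ((1 - x/2) * yOf y x)
  + 1/2 * ((1 - yOf y x) * Real.log (1 - yOf y x))
  - 1/2 * ((1 - yOf y x) * Real.log (1 - (2:ℝ)^(-x)))

lemma Gbr_eq_Ffun (y : ℝ) (hy0 : 0 < y) (hy : y < 1 / 2) {x : ℝ}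
    (hx : x ∈ Set.Ioo (0:ℝ) 1) : Gbr y x = Ffun y x := by
  obtain ⟨hx0, hx1⟩ := hx
  have h2 : (0:ℝ) < 2 := by norm_num
  set t : ℝ := (2:ℝ)^(1-x) with hts
  have ht1 : 1 < t := (Real.one_lt_rpow_iff_of_pos h2).2 (Or.inl ⟨one_lt_two, by linarith⟩)
  have ht2 : t < 2 := by
    have h : (2:ℝ)^(1-x) < (2:ℝ)^(1:ℝ) := (Real.rpow_lt_rpow_left_iff one_lt_two).2 (by linarith)
    rw [Real.rpow_one] at h
    exact h
  have ht0 : 0 < t := by linarith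
  have h1y : 0 < 1 - y := by linarith
  set Y : ℝ := yOf y x with hYs
  have hYdef : Y = y + (1-y)*(t-1) := rfl
  have hYy : y < Y := by nlinarith
  have hY0 : 0 < Y := lt_trans hy0 hYy
  have hY1 : Y < 1 := by nlinarith
  have h1Y : 0 < 1 - Y := by linarith
  have hinv : (2:ℝ)^(-(1-x)) = t⁻¹ := by rw [Real.rpow_neg h2.le]
  have hs : (2:ℝ)^(-x) = t/2 := by
    rw [hts]
    have h := Real.rpow_add h2 (-x) 1
    rw [Real.rpow_one] at h
    rw [show (1:ℝ) - x = -x + 1 by ring, h]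
    ring
  have hs0 : 0 < (2:ℝ)^(-x) := Real.rpow_pos_of_pos h2 _
  have hs1 : (2:ℝ)^(-x) < 1 := by rw [hs]; linarith
  have h1s : 0 < 1 - (2:ℝ)^(-x) := by linarith
  have hlogt : Real.log t = (1-x) * Real.log 2 := Real.log_rpow h2 _
  have h1t : (0:ℝ) < 1 - t⁻¹ := by
    have : t⁻¹ < 1 := by rw [inv_lt_one_iff₀]; right; exact ht1
    linarith
  -- log rewrites
  have l0 : klBer y (1/2) = Real.log 2 + y * Real.log y + (1-y) * Real.log (1-y) := by
    rw [klBer, show ((1:ℝ) - 1/2) = 1/2 by norm_num, show y/(1/2:ℝ) = y*2 by ring,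
      show (1-y)/(1/2:ℝ) = (1-y)*2 by ring, Real.log_mul hy0.ne' two_ne_zero,
      Real.log_mul h1y.ne' two_ne_zero]
    ring
  have l1 : Real.log ((y/Y) / (2:ℝ)^(-(1-x))) = Real.log y - Real.log Y + (1-x)*Real.log 2 := by
    rw [hinv, div_eq_mul_inv (y/Y), inv_inv, Real.log_mul (by positivity) ht0.ne',
      Real.log_div hy0.ne' hY0.ne', hlogt]
    try ring
  have l2 : Real.log ((1 - y/Y) / (1 - (2:ℝ)^(-(1-x)))) =
      Real.log (1-y) - Real.log Y + (1-x)*Real.log 2 := by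
    have he : (1 - y/Y) / (1 - (2:ℝ)^(-(1-x))) = (1-y) * t / Y := by
      rw [hinv, div_eq_div_iff (by linarith) hY0.ne', sub_mul, div_mul_cancel₀ y hY0.ne',
        mul_sub, mul_one, mul_assoc, mul_inv_cancel₀ ht0.ne', mul_one, hYdef]
      ring
    rw [he, Real.log_div (by positivity) hY0.ne', Real.log_mul h1y.ne' ht0.ne', hlogt]
    ring
  have l3 : Real.log (Y / (2:ℝ)^(-x)) = Real.log Y + x * Real.log 2 := by
    rw [Real.log_div hY0.ne' hs0.ne', Real.log_rpow h2]
    ring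
  have l4 : Real.log ((1 - Y) / (1 - (2:ℝ)^(-x))) =
      Real.log (1-Y) - Real.log (1 - (2:ℝ)^(-x)) :=
    Real.log_div h1Y.ne' h1s.ne'
  have hYne : y + (1-y)*(t-1) ≠ 0 := by rw [← hYdef]; exact hY0.ne'
  show Gfun y Y x = Ffun y x
  rw [Gfun, Ffun, l0, klBer, klBer, l1, l2, l3, l4, ← hYs, hYdef]
  field_simp
  ring

noncomputable def Dfun (y x : ℝ) : ℝ :=
  (Real.log 2 + y * Real.log y + (1-y) * Real.log (1-y)) / 2
  - Real.log 2 * (2:ℝ)^(1-x) * ((1-y) * Real.log (1-y))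
  + Real.log 2 * (1-y) * (2:ℝ)^(1-x) / 2 * (Real.log (yOf y x) + 1)
  - Real.log 2 / 2 * yOf y x
  - Real.log 2 ^ 2 * (1 - x/2) * ((1-y) * (2:ℝ)^(1-x))
  + Real.log 2 * (1-y) * (2:ℝ)^(1-x) / 2 * (Real.log (1 - yOf y x) + 1)
  - Real.log 2 * (1-y) * (2:ℝ)^(1-x) / 2 * Real.log (1 - (2:ℝ)^(-x))
  - Real.log 2 / 2 * ((1 - yOf y x) * (2:ℝ)^(-x) / (1 - (2:ℝ)^(-x)))

lemma hasDerivAt_Ffun (y : ℝ) (hy0 : 0 < y) (hy : y < 1 / 2) {x : ℝ}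
    (hY0 : 0 < yOf y x) (hY1 : yOf y x < 1) (hs1 : (2:ℝ)^(-x) < 1) :
    HasDerivAt (Ffun y) (Dfun y x) x := by
  have h2 : (0:ℝ) < 2 := by norm_num
  have h1y : 0 < 1 - y := by linarith
  have h1Y : 0 < 1 - yOf y x := by linarith
  have hs0 : 0 < (2:ℝ)^(-x) := Real.rpow_pos_of_pos h2 _
  have h1s : 0 < 1 - (2:ℝ)^(-x) := by linarith
  have hd1x : HasDerivAt (fun z : ℝ => 1 - z) (-1) x := (hasDerivAt_id x).const_sub 1
  have hdnx : HasDerivAt (fun z : ℝ => -z) (-1) x := by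
    exact (hasDerivAt_id' x).neg
  have ht : HasDerivAt (fun z : ℝ => (2:ℝ)^(1-z)) ((2:ℝ)^(1-x) * Real.log 2 * (-1)) x :=
    HasDerivAt.comp x (Real.hasStrictDerivAt_const_rpow h2 (1-x)).hasDerivAt hd1x
  have hsx : HasDerivAt (fun z : ℝ => (2:ℝ)^(-z)) ((2:ℝ)^(-x) * Real.log 2 * (-1)) x :=
    HasDerivAt.comp x (Real.hasStrictDerivAt_const_rpow h2 (-x)).hasDerivAt hdnx
  have hY : HasDerivAt (fun z : ℝ => yOf y z)
      ((1-y) * ((2:ℝ)^(1-x) * Real.log 2 * (-1))) x := by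
    have := ((ht.sub_const 1).const_mul (1-y)).const_add y
    exact this
  have hLY : HasDerivAt (fun z : ℝ => Real.log (yOf y z))
      ((1-y) * ((2:ℝ)^(1-x) * Real.log 2 * (-1)) / yOf y x) x := hY.log hY0.ne'
  have hL1Y : HasDerivAt (fun z : ℝ => Real.log (1 - yOf y z))
      (-((1-y) * ((2:ℝ)^(1-x) * Real.log 2 * (-1))) / (1 - yOf y x)) x :=
    (hY.const_sub 1).log h1Y.ne'
  have hL1s : HasDerivAt (fun z : ℝ => Real.log (1 - (2:ℝ)^(-z)))
      (-((2:ℝ)^(-x) * Real.log 2 * (-1)) / (1 - (2:ℝ)^(-x))) x :=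
    (hsx.const_sub 1).log h1s.ne'
  have hA : HasDerivAt (fun z : ℝ => (z/2 - 1) * (Real.log 2 + y * Real.log y + (1-y) * Real.log (1-y)))
      ((1/2) * (Real.log 2 + y * Real.log y + (1-y) * Real.log (1-y))) x := by
    have := (((hasDerivAt_id x).div_const 2).sub_const 1).mul_const
      (Real.log 2 + y * Real.log y + (1-y) * Real.log (1-y))
    simpa using this
  have hB : HasDerivAt (fun _ : ℝ => y * Real.log y) 0 x := hasDerivAt_const x _
  have hC : HasDerivAt (fun z : ℝ => (1-y) * ((2:ℝ)^(1-z) - 1) * Real.log (1-y))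
      ((1-y) * ((2:ℝ)^(1-x) * Real.log 2 * (-1)) * Real.log (1-y)) x := by
    exact ((ht.sub_const 1).const_mul (1-y)).mul_const (Real.log (1-y))
  have hD : HasDerivAt (fun z : ℝ => 1/2 * (yOf y z * Real.log (yOf y z)))
      (1/2 * ((1-y) * ((2:ℝ)^(1-x) * Real.log 2 * (-1)) * Real.log (yOf y x)
        + yOf y x * ((1-y) * ((2:ℝ)^(1-x) * Real.log 2 * (-1)) / yOf y x))) x :=
    (hY.mul hLY).const_mul (1/2)
  have hE : HasDerivAt (fun z : ℝ => Real.log 2 * ((1 - z/2) * yOf y z))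
      (Real.log 2 * ((-(1/2)) * yOf y x
        + (1 - x/2) * ((1-y) * ((2:ℝ)^(1-x) * Real.log 2 * (-1))))) x := by
    have hh : HasDerivAt (fun z : ℝ => 1 - z/2) (-(1/2)) x := by
      simpa using ((hasDerivAt_id x).div_const 2).const_sub 1
    exact ((hh.mul hY).const_mul (Real.log 2))
  have hF : HasDerivAt (fun z : ℝ => 1/2 * ((1 - yOf y z) * Real.log (1 - yOf y z)))
      (1/2 * ((-((1-y) * ((2:ℝ)^(1-x) * Real.log 2 * (-1)))) * Real.log (1 - yOf y x)
        + (1 - yOf y x) * (-((1-y) * ((2:ℝ)^(1-x) * Real.log 2 * (-1))) / (1 - yOf y x)))) x :=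
    ((hY.const_sub 1).mul hL1Y).const_mul (1/2)
  have hG : HasDerivAt (fun z : ℝ => 1/2 * ((1 - yOf y z) * Real.log (1 - (2:ℝ)^(-z))))
      (1/2 * ((-((1-y) * ((2:ℝ)^(1-x) * Real.log 2 * (-1)))) * Real.log (1 - (2:ℝ)^(-x))
        + (1 - yOf y x) * (-((2:ℝ)^(-x) * Real.log 2 * (-1)) / (1 - (2:ℝ)^(-x))))) x :=
    ((hY.const_sub 1).mul hL1s).const_mul (1/2)
  have htot := (((((hA.add hB).add hC).sub hD).add hE).add hF).sub hG
  have : Ffun y = fun z => ((((( (z/2 - 1) * (Real.log 2 + y * Real.log y + (1-y) * Real.log (1-y))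
      + y * Real.log y) + (1-y) * ((2:ℝ)^(1-z) - 1) * Real.log (1-y))
      - 1/2 * (yOf y z * Real.log (yOf y z))) + Real.log 2 * ((1 - z/2) * yOf y z))
      + 1/2 * ((1 - yOf y z) * Real.log (1 - yOf y z)))
      - 1/2 * ((1 - yOf y z) * Real.log (1 - (2:ℝ)^(-z))) := by
    funext z
    rw [Ffun]
  rw [this]
  refine htot.congr_deriv ?_
  rw [Dfun]
  field_simp
  ring

lemma deriv_Gbr_eq (y : ℝ) (hy0 : 0 < y) (hy : y < 1 / 2) {x : ℝ}
    (hx : x ∈ Set.Ioo (0:ℝ) 1) : deriv (Gbr y) x = Dfun y x := by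
  obtain ⟨hx0, hx1⟩ := hx
  have h2 : (0:ℝ) < 2 := by norm_num
  have ht1 : 1 < (2:ℝ)^(1-x) := (Real.one_lt_rpow_iff_of_pos h2).2 (Or.inl ⟨one_lt_two, by linarith⟩)
  have ht2 : (2:ℝ)^(1-x) < 2 := by
    have h : (2:ℝ)^(1-x) < (2:ℝ)^(1:ℝ) := (Real.rpow_lt_rpow_left_iff one_lt_two).2 (by linarith)
    rw [Real.rpow_one] at h
    exact h
  have hY0 : 0 < yOf y x := by rw [yOf]; nlinarith
  have hY1 : yOf y x < 1 := by rw [yOf]; nlinarith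
  have hs1 : (2:ℝ)^(-x) < 1 := by
    have h : (2:ℝ)^(-x) < (2:ℝ)^(0:ℝ) := (Real.rpow_lt_rpow_left_iff one_lt_two).2 (by linarith)
    rw [Real.rpow_zero] at h
    exact h
  have hF := hasDerivAt_Ffun y hy0 hy hY0 hY1 hs1
  have heq : Gbr y =ᶠ[nhds x] Ffun y :=
    Filter.eventuallyEq_of_mem (isOpen_Ioo.mem_nhds ⟨hx0, hx1⟩)
      (fun z hz => Gbr_eq_Ffun y hy0 hy hz)
  exact (hF.congr_of_eventuallyEq heq).deriv

lemma yOf_one (y : ℝ) : yOf y 1 = y := by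
  rw [yOf, show (1:ℝ) - 1 = 0 by norm_num, Real.rpow_zero]
  ring

lemma continuousAt_Dfun (y : ℝ) (hy0 : 0 < y) (hy : y < 1 / 2) :
    ContinuousAt (Dfun y) 1 := by
  have h2 : (0:ℝ) < 2 := by norm_num
  have c1 : ContinuousAt (fun x : ℝ => (2:ℝ)^(1-x)) 1 :=
    (Real.continuousAt_const_rpow (b := 1 - (1:ℝ)) two_ne_zero).comp
      ((continuous_const.sub continuous_id).continuousAt)
  have c2 : ContinuousAt (fun x : ℝ => (2:ℝ)^(-x)) 1 :=
    (Real.continuousAt_const_rpow (b := -(1:ℝ)) two_ne_zero).comp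
      (continuous_neg.continuousAt)
  have cY : ContinuousAt (fun x : ℝ => yOf y x) 1 := by
    have he : (fun x : ℝ => yOf y x) = fun x => y + (1-y) * ((2:ℝ)^(1-x) - 1) := rfl
    rw [he]
    exact continuousAt_const.add (continuousAt_const.mul (c1.sub continuousAt_const))
  have hYv : yOf y 1 = y := yOf_one y
  have h2v : (2:ℝ)^(-(1:ℝ)) = 1/2 := by
    rw [Real.rpow_neg_one]
    norm_num
  have cLY : ContinuousAt (fun x : ℝ => Real.log (yOf y x)) 1 :=
    ContinuousAt.log cY (by rw [hYv]; exact hy0.ne')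
  have cL1Y : ContinuousAt (fun x : ℝ => Real.log (1 - yOf y x)) 1 :=
    ContinuousAt.log (continuousAt_const.sub cY)
      (by rw [hYv]; exact (by linarith : (0:ℝ) < 1 - y).ne')
  have cL1s : ContinuousAt (fun x : ℝ => Real.log (1 - (2:ℝ)^(-x))) 1 :=
    ContinuousAt.log (continuousAt_const.sub c2) (by simp only [h2v]; norm_num)
  have cdenom : (fun x : ℝ => 1 - (2:ℝ)^(-x)) 1 ≠ 0 := by simp only [h2v]; norm_num
  unfold Dfun
  exact ((((((continuousAt_const.sub
    ((continuousAt_const.mul c1).mul continuousAt_const)).add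
    (((continuousAt_const.mul c1).div_const 2).mul (cLY.add continuousAt_const))).sub
    (continuousAt_const.mul cY)).sub
    ((continuousAt_const.mul (continuousAt_const.sub (continuousAt_id.div_const 2))).mul
      (continuousAt_const.mul c1))).add
    (((continuousAt_const.mul c1).div_const 2).mul (cL1Y.add continuousAt_const))).sub
    (((continuousAt_const.mul c1).div_const 2).mul cL1s)).sub
    (continuousAt_const.mul (((continuousAt_const.sub cY).mul c2).div
      (continuousAt_const.sub c2) cdenom))

lemma Dfun_one (y : ℝ) (hy0 : 0 < y) (hy : y < 1 / 2) :
    Dfun y 1 = Real.log 2 * ((1 - y) * (1 + 1 / 2 * Real.log (y / (1 - y))) - binEnt y / 2) := by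
  have h1y : 0 < 1 - y := by linarith
  have hlne : Real.log 2 ≠ 0 := ne_of_gt (Real.log_pos (by norm_num))
  have e1 : (2:ℝ)^((1:ℝ)-1) = 1 := by rw [show (1:ℝ)-1 = 0 by norm_num, Real.rpow_zero]
  have e2 : (2:ℝ)^(-(1:ℝ)) = 1/2 := by rw [Real.rpow_neg_one]; norm_num
  have e3 : Real.log (1 - (1:ℝ)/2) = -Real.log 2 := by
    rw [show (1:ℝ) - 1/2 = 2⁻¹ by norm_num, Real.log_inv]
  rw [Dfun, yOf_one, e1, e2, e3, binEnt, Real.logb, Real.logb,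
    Real.log_div hy0.ne' h1y.ne']
  field_simp
  ring

/-- The limit of `∂Ğ/∂x` as `x → 1⁻` equals
`log 2 ((1-y)(1 + (1/2) log(y/(1-y))) - h₂(y)/2)`, which is strictly negative for
`y ∈ (0,1/2)`. -/
theorem Gbr_deriv_limit_at_one (y : ℝ) (hy0 : 0 < y) (hy : y < 1 / 2) :
    Filter.Tendsto (fun x => deriv (Gbr y) x) (nhdsWithin 1 (Set.Iio 1))
      (nhds (Real.log 2 * ((1 - y) * (1 + 1 / 2 * Real.log (y / (1 - y))) - binEnt y / 2))) ∧
    Real.log 2 * ((1 - y) * (1 + 1 / 2 * Real.log (y / (1 - y))) - binEnt y / 2) < 0 := by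
  constructor
  · have hev : ∀ᶠ x in nhdsWithin 1 (Set.Iio 1), Dfun y x = deriv (Gbr y) x := by
      filter_upwards [Ioo_mem_nhdsLT_of_mem
        (by norm_num : (1:ℝ) ∈ Set.Ioc (0:ℝ) 1)] with z hz
      exact (deriv_Gbr_eq y hy0 hy hz).symm
    have htd : Filter.Tendsto (Dfun y) (nhdsWithin 1 (Set.Iio 1)) (nhds (Dfun y 1)) :=
      ((continuousAt_Dfun y hy0 hy).tendsto).mono_left nhdsWithin_le_nhds
    rw [← Dfun_one y hy0 hy]
    exact htd.congr' hev
  · exact Tval_neg y hy0 hy
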